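/- For the binary joint distribution p(a,b,λ) (with all entries strictly positive), the mutual information I(X:Y) = Σ_{x,y} p_{xy} log(p_{xy}/(p_{X=x} p_{Y=y})) is a convex function of λ on the interior of its domain, for fixed a and b: its second derivative with respect to λ equals (1/16)·Σ_{x,y} 1/p_{xy} ≥ 0. -/

import Mathlib

noncomputable section

def p00 (a b lam : ℝ) : ℝ := (1 + a + b + lam) / 4
def p01 (a b lam : ℝ) : ℝ := (1 + a - b - lam) / 4
def p10 (a b lam : ℝ) : ℝ := (1 - a + b - lam) / 4
def p11 (a b lam : ℝ) : ℝ := (1 - a - b + lam) / 4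

def pX0 (a : ℝ) : ℝ := (1 + a) / 2
def pX1 (a : ℝ) : ℝ := (1 - a) / 2
def pY0 (b : ℝ) : ℝ := (1 + b) / 2
def pY1 (b : ℝ) : ℝ := (1 - b) / 2

/-- Mutual information of the binary joint distribution `p(a,b,λ)` (natural log). -/
def MI (a b lam : ℝ) : ℝ :=
    p00 a b lam * Real.log (p00 a b lam / (pX0 a * pY0 b))
  + p01 a b lam * Real.log (p01 a b lam / (pX0 a * pY1 b))
  + p10 a b lam * Real.log (p10 a b lam / (pX1 a * pY0 b))
  + p11 a b lam * Real.log (p11 a b lam / (pX1 a * pY1 b))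

/-- First derivative of `MI` in `λ`. -/
def D1 (a b t : ℝ) : ℝ :=
    (1/4) * Real.log (p00 a b t / (pX0 a * pY0 b))
  - (1/4) * Real.log (p01 a b t / (pX0 a * pY1 b))
  - (1/4) * Real.log (p10 a b t / (pX1 a * pY0 b))
  + (1/4) * Real.log (p11 a b t / (pX1 a * pY1 b))

lemma hd_p00 (a b t : ℝ) : HasDerivAt (fun s => p00 a b s) (1/4) t := by
  have : HasDerivAt (fun s : ℝ => (1 + a + b + s) / 4) (1/4) t := by
    simpa using (((hasDerivAt_id t).const_add (1 + a + b)).div_const 4)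
  simpa [p00] using this

lemma hd_p01 (a b t : ℝ) : HasDerivAt (fun s => p01 a b s) (-(1/4)) t := by
  have : HasDerivAt (fun s : ℝ => (1 + a - b - s) / 4) (-1/4) t := by
    simpa [sub_eq_add_neg] using (((hasDerivAt_id t).neg.const_add (1 + a - b)).div_const 4)
  simpa [p01, sub_eq_add_neg, neg_div] using this

lemma hd_p10 (a b t : ℝ) : HasDerivAt (fun s => p10 a b s) (-(1/4)) t := by
  have : HasDerivAt (fun s : ℝ => (1 - a + b - s) / 4) (-1/4) t := by
    simpa [sub_eq_add_neg] using (((hasDerivAt_id t).neg.const_add (1 - a + b)).div_const 4)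
  simpa [p10, sub_eq_add_neg, neg_div] using this

lemma hd_p11 (a b t : ℝ) : HasDerivAt (fun s => p11 a b s) (1/4) t := by
  have : HasDerivAt (fun s : ℝ => (1 - a - b + s) / 4) (1/4) t := by
    simpa using (((hasDerivAt_id t).const_add (1 - a - b)).div_const 4)
  simpa [p11] using this

lemma marg_pos (a b t : ℝ) (h00 : 0 < p00 a b t) (h01 : 0 < p01 a b t)
    (h10 : 0 < p10 a b t) (h11 : 0 < p11 a b t) :
    0 < pX0 a ∧ 0 < pX1 a ∧ 0 < pY0 b ∧ 0 < pY1 b := by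
  unfold p00 p01 p10 p11 at *
  unfold pX0 pX1 pY0 pY1
  constructor; · linarith
  constructor; · linarith
  constructor; · linarith
  linarith

lemma term_hasDeriv (c d : ℝ) (hc : c ≠ 0) (p : ℝ → ℝ)
    (hp : HasDerivAt p d t) (hpt : 0 < p t) :
    HasDerivAt (fun s => p s * Real.log (p s / c))
      (d * Real.log (p t / c) + d) t := by
  have hne : p t / c ≠ 0 := div_ne_zero hpt.ne' hc
  have hlog : HasDerivAt (fun s => Real.log (p s / c)) ((d / c) / (p t / c)) t :=
    (hp.div_const c).log hne
  have H := hp.mul hlog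
  refine H.congr_deriv ?_
  have : (d / c) / (p t / c) = d / p t := by
    field_simp
  rw [this]
  field_simp

lemma hasDeriv_MI (a b t : ℝ) (h00 : 0 < p00 a b t) (h01 : 0 < p01 a b t)
    (h10 : 0 < p10 a b t) (h11 : 0 < p11 a b t) :
    HasDerivAt (fun s => MI a b s) (D1 a b t) t := by
  obtain ⟨hx0, hx1, hy0, hy1⟩ := marg_pos a b t h00 h01 h10 h11
  have H := (((term_hasDeriv (pX0 a * pY0 b) (1/4) (mul_pos hx0 hy0).ne'
      (fun s => p00 a b s) (hd_p00 a b t) h00).add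
    (term_hasDeriv (pX0 a * pY1 b) (-(1/4)) (mul_pos hx0 hy1).ne'
      (fun s => p01 a b s) (hd_p01 a b t) h01)).add
    (term_hasDeriv (pX1 a * pY0 b) (-(1/4)) (mul_pos hx1 hy0).ne'
      (fun s => p10 a b s) (hd_p10 a b t) h10)).add
    (term_hasDeriv (pX1 a * pY1 b) (1/4) (mul_pos hx1 hy1).ne'
      (fun s => p11 a b s) (hd_p11 a b t) h11)
  have heq : (fun s => MI a b s) = fun s =>
      (((p00 a b s * Real.log (p00 a b s / (pX0 a * pY0 b))
      + p01 a b s * Real.log (p01 a b s / (pX0 a * pY1 b)))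
      + p10 a b s * Real.log (p10 a b s / (pX1 a * pY0 b)))
      + p11 a b s * Real.log (p11 a b s / (pX1 a * pY1 b))) := by
    funext s; simp [MI]
  rw [heq]
  refine H.congr_deriv ?_
  simp [D1]; ring

lemma hasDeriv_D1 (a b t : ℝ) (h00 : 0 < p00 a b t) (h01 : 0 < p01 a b t)
    (h10 : 0 < p10 a b t) (h11 : 0 < p11 a b t) :
    HasDerivAt (fun s => D1 a b s)
      ((1 / 16) * (1 / p00 a b t + 1 / p01 a b t + 1 / p10 a b t + 1 / p11 a b t)) t := by
  obtain ⟨hx0, hx1, hy0, hy1⟩ := marg_pos a b t h00 h01 h10 h11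
  have l00 : HasDerivAt (fun s => Real.log (p00 a b s / (pX0 a * pY0 b)))
      (((1/4) / (pX0 a * pY0 b)) / (p00 a b t / (pX0 a * pY0 b))) t :=
    ((hd_p00 a b t).div_const _).log (div_ne_zero h00.ne' (mul_pos hx0 hy0).ne')
  have l01 : HasDerivAt (fun s => Real.log (p01 a b s / (pX0 a * pY1 b)))
      ((-(1/4) / (pX0 a * pY1 b)) / (p01 a b t / (pX0 a * pY1 b))) t :=
    ((hd_p01 a b t).div_const _).log (div_ne_zero h01.ne' (mul_pos hx0 hy1).ne')
  have l10 : HasDerivAt (fun s => Real.log (p10 a b s / (pX1 a * pY0 b)))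
      ((-(1/4) / (pX1 a * pY0 b)) / (p10 a b t / (pX1 a * pY0 b))) t :=
    ((hd_p10 a b t).div_const _).log (div_ne_zero h10.ne' (mul_pos hx1 hy0).ne')
  have l11 : HasDerivAt (fun s => Real.log (p11 a b s / (pX1 a * pY1 b)))
      (((1/4) / (pX1 a * pY1 b)) / (p11 a b t / (pX1 a * pY1 b))) t :=
    ((hd_p11 a b t).div_const _).log (div_ne_zero h11.ne' (mul_pos hx1 hy1).ne')
  have H := (((l00.const_mul (1/4 : ℝ)).sub (l01.const_mul (1/4 : ℝ))).sub
    (l10.const_mul (1/4 : ℝ))).add (l11.const_mul (1/4 : ℝ))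
  have heq : (fun s => D1 a b s) = fun s =>
      (((1/4) * Real.log (p00 a b s / (pX0 a * pY0 b))
      - (1/4) * Real.log (p01 a b s / (pX0 a * pY1 b)))
      - (1/4) * Real.log (p10 a b s / (pX1 a * pY0 b)))
      + (1/4) * Real.log (p11 a b s / (pX1 a * pY1 b)) := by
    funext s; simp [D1]
  rw [heq]
  refine H.congr_deriv ?_
  field_simp
  ring

theorem MI_second_deriv_lambda (a b lam : ℝ)
    (h00 : 0 < p00 a b lam) (h01 : 0 < p01 a b lam)
    (h10 : 0 < p10 a b lam) (h11 : 0 < p11 a b lam) :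
    deriv (deriv (fun t => MI a b t)) lam
      = (1 / 16) * (1 / p00 a b lam + 1 / p01 a b lam
        + 1 / p10 a b lam + 1 / p11 a b lam) ∧
    0 ≤ deriv (deriv (fun t => MI a b t)) lam := by
  have c00 : ContinuousAt (fun t => p00 a b t) lam := ((hd_p00 a b lam).continuousAt)
  have c01 : ContinuousAt (fun t => p01 a b t) lam := ((hd_p01 a b lam).continuousAt)
  have c10 : ContinuousAt (fun t => p10 a b t) lam := ((hd_p10 a b lam).continuousAt)
  have c11 : ContinuousAt (fun t => p11 a b t) lam := ((hd_p11 a b lam).continuousAt)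
  have e00 : ∀ᶠ t in nhds lam, 0 < p00 a b t := c00.eventually (eventually_gt_nhds h00)
  have e01 : ∀ᶠ t in nhds lam, 0 < p01 a b t := c01.eventually (eventually_gt_nhds h01)
  have e10 : ∀ᶠ t in nhds lam, 0 < p10 a b t := c10.eventually (eventually_gt_nhds h10)
  have e11 : ∀ᶠ t in nhds lam, 0 < p11 a b t := c11.eventually (eventually_gt_nhds h11)
  have hev : (deriv (fun t => MI a b t)) =ᶠ[nhds lam] (fun t => D1 a b t) := by
    filter_upwards [e00, e01, e10, e11] with t h0 h1 h2 h3
    exact (hasDeriv_MI a b t h0 h1 h2 h3).deriv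
  have key : deriv (deriv (fun t => MI a b t)) lam = deriv (fun t => D1 a b t) lam :=
    hev.deriv_eq
  have hD1 := (hasDeriv_D1 a b lam h00 h01 h10 h11).deriv
  rw [key, hD1]
  refine ⟨rfl, ?_⟩
  positivity
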